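/- arXiv:1906.01433 — 2 statements merged into one kernel-verified Lean document; each statement's English description precedes it below -/
import Mathlib

section
/- Let [N] be partitioned into J₀, J₂, J₃, let D = ∑_{j∈J₀} d_j for fixed constants d_j ≥ 0 (j ∈ J₀), and let x be chosen uniformly at random from the set of sequences in [N]^{2M} with d_x(j) ≥ i for all j ∈ J_i (i = 2, 3) and d_x(j) = d_j for all j ∈ J₀. Let λ > 0 satisfy ∑_{i=2}^{3} (λ f_{i−1}(λ)/f_i(λ)) |J_i| = 2M − D. For j ∈ J_i (i = 2, 3) let Z_j be independent truncated Poisson random variables with parameter λ truncated at i, and for j ∈ J₀ set Z_j = d_j. Then the joint distribution of the degree sequence (d_x(j))_{j∈[N]} equals the joint distribution of (Z_j)_{j∈[N]} conditioned on the event ∑_{j∈[N]} Z_j = 2M. -/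
open scoped BigOperators

/-- `f k lam = e^lam - ∑_{i<k} lam^i / i!`. -/
noncomputable def truncF (k : ℕ) (lam : ℝ) : ℝ :=
  Real.exp lam - ∑ i ∈ Finset.range k, lam ^ i / (Nat.factorial i : ℝ)

/-- The probability mass function of a Poisson random variable with parameter `lam`
truncated at `ℓ` (i.e. conditioned on being at least `ℓ`). -/
noncomputable def truncPoissonPMF (lam : ℝ) (ℓ : ℕ) (t : ℕ) : ℝ :=
  if ℓ ≤ t then lam ^ t / ((Nat.factorial t : ℝ) * truncF ℓ lam) else 0

/-- The degree `d_x(v)` of `v` in the multigraph `G_x`: the number of indices `j` with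
`x_j = v`. -/
def seqDeg {N M : ℕ} (x : Fin M → Fin N) (v : Fin N) : ℕ :=
  (Finset.univ.filter fun i => x i = v).card

/-- The probability mass function of the variable `Z_j`: truncated Poisson (truncated at 2
resp. 3) for `j ∈ J₂` resp. `j ∈ J₃`, and the constant `d₀ j` for `j ∈ J₀`. -/
noncomputable def pmfZ {N : ℕ} (J₂ J₃ : Finset (Fin N)) (d₀ : Fin N → ℕ) (lam : ℝ)
    (j : Fin N) (t : ℕ) : ℝ :=
  if j ∈ J₂ then truncPoissonPMF lam 2 t
  else if j ∈ J₃ then truncPoissonPMF lam 3 t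
  else if t = d₀ j then 1 else 0

section Aux
open Finset Nat


open Finset Nat

section counting

variable {α β : Type*} [Fintype α] [DecidableEq α] [Fintype β] [DecidableEq β]

def fiberFstEquiv {β : Type*} (γ : β → Type*) (v : β) :
    {s : Σ b, γ b // s.1 = v} ≃ γ v where
  toFun s := s.2 ▸ s.1.2
  invFun g := ⟨⟨v, g⟩, rfl⟩
  left_inv := by rintro ⟨⟨b, g⟩, rfl⟩; rfl
  right_inv g := rfl

lemma sigma_eq_mk {β : Type*} {γ : β → Type*} (s : Σ b, γ b) {b : β} (h : s.1 = b) :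
    s = ⟨b, h ▸ s.2⟩ := by cases s; cases h; rfl

def fiberEquivPi (γ : β → Type*) (x : α → β) :
    {e : α ≃ Σ v, γ v // ∀ i, (e i).1 = x i} ≃ ∀ v, ({i // x i = v} ≃ γ v) where
  toFun e v := (Equiv.subtypeEquiv e.1 (fun i => by rw [e.2 i])).trans (fiberFstEquiv γ v)
  invFun g := ⟨(Equiv.sigmaFiberEquiv x).symm.trans (Equiv.sigmaCongrRight g),
    fun i => rfl⟩
  left_inv e := by
    obtain ⟨e, he⟩ := e
    apply Subtype.ext
    apply Equiv.ext
    intro i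
    exact (sigma_eq_mk (e i) (he i)).symm
  right_inv g := by
    funext v
    apply Equiv.ext
    rintro ⟨i, h⟩
    subst h
    rfl

end counting

section counting2

variable {α β : Type*} [Fintype α] [DecidableEq α] [Fintype β] [DecidableEq β]

lemma card_equiv_ite (α γ : Type*) [Fintype α] [DecidableEq α] [Fintype γ] [DecidableEq γ] :
    Fintype.card (α ≃ γ) =
      if Fintype.card α = Fintype.card γ then (Fintype.card α)! else 0 := by
  split_ifs with h
  · exact Fintype.card_equiv (Fintype.equivOfCardEq h)
  · have : IsEmpty (α ≃ γ) := ⟨fun e => h (Fintype.card_congr e)⟩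
    exact Fintype.card_eq_zero

lemma card_deg_seq (d : β → ℕ) :
    Nat.card {x : α → β // ∀ v, (Finset.univ.filter fun i => x i = v).card = d v}
        * ∏ v, (d v)! =
      if ∑ v, d v = Fintype.card α then (Fintype.card α)! else 0 := by
  classical
  have key : Fintype.card (α ≃ Σ v, Fin (d v)) =
      ∑ x : α → β, Fintype.card {e : α ≃ Σ v, Fin (d v) // ∀ i, (e i).1 = x i} := by
    rw [← Fintype.card_sigma]
    apply Fintype.card_congr
    exact (Equiv.sigmaFiberEquiv (fun e : α ≃ Σ v, Fin (d v) => fun i => (e i).1)).symm.trans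
      (Equiv.sigmaCongrRight fun x => Equiv.subtypeEquivRight fun e => funext_iff)
  have hfib : ∀ x : α → β, Fintype.card {e : α ≃ Σ v, Fin (d v) // ∀ i, (e i).1 = x i} =
      if (∀ v, (Finset.univ.filter fun i => x i = v).card = d v) then ∏ v, (d v)! else 0 := by
    intro x
    rw [Fintype.card_congr (fiberEquivPi (fun v => Fin (d v)) x), Fintype.card_pi]
    have : ∀ v, Fintype.card ({i // x i = v} ≃ Fin (d v)) =
        if (Finset.univ.filter fun i => x i = v).card = d v then (d v)! else 0 := by
      intro v
      rw [card_equiv_ite, Fintype.card_subtype, Fintype.card_fin]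
      split_ifs with h
      · rw [h]
      · rfl
    simp_rw [this]
    by_cases h : ∀ v, (Finset.univ.filter fun i => x i = v).card = d v
    · rw [if_pos h]; exact Finset.prod_congr rfl fun v _ => if_pos (h v)
    · rw [if_neg h]
      push_neg at h
      obtain ⟨v, hv⟩ := h
      exact Finset.prod_eq_zero (Finset.mem_univ v) (if_neg hv)
  have lhs : Fintype.card (α ≃ Σ v, Fin (d v)) =
      if ∑ v, d v = Fintype.card α then (Fintype.card α)! else 0 := by
    rw [card_equiv_ite, Fintype.card_sigma]
    simp only [Fintype.card_fin]
    by_cases h : ∑ v, d v = Fintype.card α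
    · rw [if_pos h, if_pos h.symm]
    · rw [if_neg h, if_neg fun hh => h hh.symm]
  rw [← lhs, key]
  simp_rw [hfib]
  rw [← Finset.sum_filter, Finset.sum_const, smul_eq_mul,
    Nat.card_eq_fintype_card, Fintype.card_subtype, mul_comm]

end counting2

lemma truncF_pos (k : ℕ) {lam : ℝ} (hlam : 0 < lam) : 0 < truncF k lam := by
  have h := Real.sum_le_exp_of_nonneg hlam.le (k + 1)
  rw [Finset.sum_range_succ] at h
  have hk : 0 < lam ^ k / (k ! : ℝ) := by positivity
  unfold truncF
  linarith

lemma natCard_subtype' {α : Type*} [Fintype α] (p : α → Prop) [DecidablePred p] :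
    Nat.card {x // p x} = (Finset.univ.filter p).card := by
  rw [Nat.card_eq_fintype_card, Fintype.card_subtype]

lemma card_deg_seq' (m N : ℕ) (d : Fin N → ℕ) :
    Nat.card {x : Fin m → Fin N // ∀ v, seqDeg x v = d v} * ∏ v, (d v)! =
      if ∑ v, d v = m then m ! else 0 := by
  have := card_deg_seq (α := Fin m) (β := Fin N) d
  simpa [seqDeg, Fintype.card_fin] using this


end Aux

open Finset Nat in
/-- The degree sequence of a uniform `x ∈ [N]^{2M}` conditioned on `d_x(j) ≥ i` for `j ∈ Jᵢ`
(`i = 2,3`) and `d_x(j) = d_j` on `J₀`, is distributed as independent truncated Poissons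
(constants on `J₀`) conditioned on their sum being `2M`: the two joint probability mass
functions agree at every candidate degree sequence `d`. -/
theorem stmt_5 (N M : ℕ) (J₂ J₃ : Finset (Fin N)) (hdisj : Disjoint J₂ J₃)
    (d₀ : Fin N → ℕ) (lam : ℝ) (hlam : 0 < lam)
    (heq : (lam * truncF 1 lam / truncF 2 lam) * J₂.card
        + (lam * truncF 2 lam / truncF 3 lam) * J₃.card
      = 2 * M - ∑ j ∈ (J₂ ∪ J₃)ᶜ, (d₀ j : ℝ)) :
    ∀ d : Fin N → ℕ,
      (Nat.card {x : Fin (2 * M) → Fin N //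
            ((∀ j ∈ J₂, 2 ≤ seqDeg x j) ∧ (∀ j ∈ J₃, 3 ≤ seqDeg x j) ∧
              ∀ j ∈ (J₂ ∪ J₃)ᶜ, seqDeg x j = d₀ j) ∧ ∀ j, seqDeg x j = d j} : ℝ) /
          (Nat.card {x : Fin (2 * M) → Fin N //
            (∀ j ∈ J₂, 2 ≤ seqDeg x j) ∧ (∀ j ∈ J₃, 3 ≤ seqDeg x j) ∧
              ∀ j ∈ (J₂ ∪ J₃)ᶜ, seqDeg x j = d₀ j} : ℝ)
        = (if ∑ j, d j = 2 * M then ∏ j, pmfZ J₂ J₃ d₀ lam j (d j) else 0) /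
            ∑' d' : Fin N → ℕ,
              (if ∑ j, d' j = 2 * M then ∏ j, pmfZ J₂ J₃ d₀ lam j (d' j) else 0) := by
  classical
  intro d
  set m := 2 * M with hm
  set C : (Fin m → Fin N) → Prop := fun x =>
    (∀ j ∈ J₂, 2 ≤ seqDeg x j) ∧ (∀ j ∈ J₃, 3 ≤ seqDeg x j) ∧
      ∀ j ∈ (J₂ ∪ J₃)ᶜ, seqDeg x j = d₀ j with hC
  set V : (Fin N → ℕ) → Prop := fun e =>
    (∀ j ∈ J₂, 2 ≤ e j) ∧ (∀ j ∈ J₃, 3 ≤ e j) ∧ ∀ j ∈ (J₂ ∪ J₃)ᶜ, e j = d₀ j with hV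
  set P : (Fin N → ℕ) → ℝ := fun e =>
    if ∑ j, e j = m then ∏ j, pmfZ J₂ J₃ d₀ lam j (e j) else 0 with hP
  set cnt : (Fin N → ℕ) → ℕ := fun e =>
    Nat.card {x : Fin m → Fin N // ∀ v, seqDeg x v = e v} with hcnt
  have hf2 : 0 < truncF 2 lam := truncF_pos 2 hlam
  have hf3 : 0 < truncF 3 lam := truncF_pos 3 hlam
  set K : ℝ := (m ! : ℝ) * truncF 2 lam ^ J₂.card * truncF 3 lam ^ J₃.card
      * lam ^ (∑ j ∈ (J₂ ∪ J₃)ᶜ, d₀ j)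
      / (lam ^ m * ∏ j ∈ (J₂ ∪ J₃)ᶜ, ((d₀ j)! : ℝ)) with hK
  have hKpos : 0 < K := by
    apply _root_.div_pos
    · have h1 : (0:ℝ) < (m ! : ℝ) := by exact_mod_cast Nat.factorial_pos m
      positivity
    · apply mul_pos (by positivity)
      exact Finset.prod_pos fun j _ => by exact_mod_cast Nat.factorial_pos (d₀ j)
  -- step 4: the pointwise identity
  have hstep : ∀ e : Fin N → ℕ, ((if V e then cnt e else 0 : ℕ) : ℝ) = K * P e := by
    intro e
    by_cases hs : ∑ j, e j = m
    · by_cases hv : V e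
      · rw [if_pos hv, hP]
        simp only [if_pos hs]
        -- product formula
        have hprodpmf : ∏ j, pmfZ J₂ J₃ d₀ lam j (e j) =
            lam ^ (∑ j ∈ J₂ ∪ J₃, e j) /
              (truncF 2 lam ^ J₂.card * truncF 3 lam ^ J₃.card
                * ∏ j ∈ J₂ ∪ J₃, ((e j)! : ℝ)) := by
          rw [← Finset.prod_mul_prod_compl (J₂ ∪ J₃)]
          have h0 : ∏ j ∈ (J₂ ∪ J₃)ᶜ, pmfZ J₂ J₃ d₀ lam j (e j) = 1 := by
            apply Finset.prod_eq_one
            intro j hj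
            have hj2 : j ∉ J₂ := fun h => (Finset.mem_compl.mp hj) (Finset.mem_union_left _ h)
            have hj3 : j ∉ J₃ := fun h => (Finset.mem_compl.mp hj) (Finset.mem_union_right _ h)
            rw [pmfZ, if_neg hj2, if_neg hj3, if_pos (hv.2.2 j hj)]
          rw [h0, mul_one, Finset.prod_union hdisj, Finset.sum_union hdisj]
          have h2 : ∏ j ∈ J₂, pmfZ J₂ J₃ d₀ lam j (e j) =
              lam ^ (∑ j ∈ J₂, e j) / (truncF 2 lam ^ J₂.card * ∏ j ∈ J₂, ((e j)! : ℝ)) := by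
            have : ∀ j ∈ J₂, pmfZ J₂ J₃ d₀ lam j (e j)
                = lam ^ e j / (((e j)! : ℝ) * truncF 2 lam) := by
              intro j hj
              rw [pmfZ, if_pos hj, truncPoissonPMF, if_pos (hv.1 j hj)]
            rw [Finset.prod_congr rfl this, Finset.prod_div_distrib, Finset.prod_mul_distrib,
              Finset.prod_pow_eq_pow_sum, Finset.prod_const]
            ring
          have h3 : ∏ j ∈ J₃, pmfZ J₂ J₃ d₀ lam j (e j) =
              lam ^ (∑ j ∈ J₃, e j) / (truncF 3 lam ^ J₃.card * ∏ j ∈ J₃, ((e j)! : ℝ)) := by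
            have : ∀ j ∈ J₃, pmfZ J₂ J₃ d₀ lam j (e j)
                = lam ^ e j / (((e j)! : ℝ) * truncF 3 lam) := by
              intro j hj
              have hj2 : j ∉ J₂ := Finset.disjoint_right.mp hdisj hj
              rw [pmfZ, if_neg hj2, if_pos hj, truncPoissonPMF, if_pos (hv.2.1 j hj)]
            rw [Finset.prod_congr rfl this, Finset.prod_div_distrib, Finset.prod_mul_distrib,
              Finset.prod_pow_eq_pow_sum, Finset.prod_const]
            ring
          rw [h2, h3, Finset.prod_union hdisj, pow_add]
          ring
        have hsplit : (∑ j ∈ J₂ ∪ J₃, e j) + (∑ j ∈ (J₂ ∪ J₃)ᶜ, d₀ j) = m := by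
          rw [← hs, ← Finset.sum_add_sum_compl (J₂ ∪ J₃) e]
          congr 1
          exact Finset.sum_congr rfl fun j hj => (hv.2.2 j hj).symm
        have hfact : ∏ j, ((e j)! : ℝ) =
            (∏ j ∈ J₂ ∪ J₃, ((e j)! : ℝ)) * ∏ j ∈ (J₂ ∪ J₃)ᶜ, ((d₀ j)! : ℝ) := by
          rw [← Finset.prod_mul_prod_compl (J₂ ∪ J₃) fun j => ((e j)! : ℝ)]
          congr 1
          exact Finset.prod_congr rfl fun j hj => by rw [hv.2.2 j hj]
        -- count formula
        have hcount := card_deg_seq' m N e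
        rw [if_pos hs] at hcount
        have hcountR : (cnt e : ℝ) * ∏ v, ((e v)! : ℝ) = (m ! : ℝ) := by
          exact_mod_cast congrArg (Nat.cast : ℕ → ℝ) hcount
        have hfne : (∏ v, ((e v)! : ℝ)) ≠ 0 :=
          ne_of_gt (Finset.prod_pos fun j _ => by exact_mod_cast Nat.factorial_pos (e j))
        have hcntR : (cnt e : ℝ) = (m ! : ℝ) / ∏ v, ((e v)! : ℝ) :=
          eq_div_of_mul_eq hfne hcountR
        rw [hcntR, hprodpmf, hK, hfact]
        rw [show lam ^ m = lam ^ (∑ j ∈ J₂ ∪ J₃, e j) * lam ^ (∑ j ∈ (J₂ ∪ J₃)ᶜ, d₀ j) by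
          rw [← pow_add, hsplit]]
        have hfne2 : (∏ j ∈ J₂ ∪ J₃, ((e j)! : ℝ)) ≠ 0 :=
          ne_of_gt (Finset.prod_pos fun j _ => by exact_mod_cast Nat.factorial_pos (e j))
        have hfne0 : (∏ j ∈ (J₂ ∪ J₃)ᶜ, ((d₀ j)! : ℝ)) ≠ 0 :=
          ne_of_gt (Finset.prod_pos fun j _ => by exact_mod_cast Nat.factorial_pos (d₀ j))
        field_simp
      · rw [if_neg hv, hP]
        simp only [if_pos hs]
        rw [hV] at hv
        have : ∏ j, pmfZ J₂ J₃ d₀ lam j (e j) = 0 := by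
          by_cases h2 : ∀ j ∈ J₂, 2 ≤ e j
          · by_cases h3 : ∀ j ∈ J₃, 3 ≤ e j
            · have h0 : ¬ ∀ j ∈ (J₂ ∪ J₃)ᶜ, e j = d₀ j := fun h => hv ⟨h2, h3, h⟩
              push_neg at h0
              obtain ⟨j, hj, hje⟩ := h0
              refine Finset.prod_eq_zero (Finset.mem_univ j) ?_
              have hj2 : j ∉ J₂ := fun h => (Finset.mem_compl.mp hj) (Finset.mem_union_left _ h)
              have hj3 : j ∉ J₃ := fun h => (Finset.mem_compl.mp hj) (Finset.mem_union_right _ h)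
              rw [pmfZ, if_neg hj2, if_neg hj3, if_neg hje]
            · push_neg at h3
              obtain ⟨j, hj, hje⟩ := h3
              refine Finset.prod_eq_zero (Finset.mem_univ j) ?_
              have hj2 : j ∉ J₂ := Finset.disjoint_right.mp hdisj hj
              rw [pmfZ, if_neg hj2, if_pos hj, truncPoissonPMF, if_neg (by omega)]
          · push_neg at h2
            obtain ⟨j, hj, hje⟩ := h2
            refine Finset.prod_eq_zero (Finset.mem_univ j) ?_
            rw [pmfZ, if_pos hj, truncPoissonPMF, if_neg (by omega)]
        rw [this, mul_zero, Nat.cast_zero]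
    · have hc0 : cnt e = 0 := by
        have hcount := card_deg_seq' m N e
        rw [if_neg hs] at hcount
        rcases Nat.mul_eq_zero.mp hcount with h | h
        · exact h
        · exact absurd h (_root_.ne_of_gt (Finset.prod_pos fun j _ => Nat.factorial_pos (e j)))
      rw [hP]
      simp only [if_neg hs, mul_zero, hc0, ite_self, Nat.cast_zero]
  -- step 2: numerator identity
  have hnum : ∀ e : Fin N → ℕ,
      Nat.card {x : Fin m → Fin N // C x ∧ ∀ j, seqDeg x j = e j} =
        if V e then cnt e else 0 := by
    intro e
    by_cases hv : V e
    · rw [if_pos hv, hcnt]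
      apply Nat.card_congr
      apply Equiv.subtypeEquivRight
      intro x
      constructor
      · exact fun h => h.2
      · intro h
        refine ⟨⟨fun j hj => ?_, fun j hj => ?_, fun j hj => ?_⟩, h⟩
        · rw [h j]; exact hv.1 j hj
        · rw [h j]; exact hv.2.1 j hj
        · rw [h j]; exact hv.2.2 j hj
    · rw [if_neg hv]
      have : IsEmpty {x : Fin m → Fin N // C x ∧ ∀ j, seqDeg x j = e j} := by
        refine ⟨fun ⟨x, hx⟩ => hv ⟨fun j hj => ?_, fun j hj => ?_, fun j hj => ?_⟩⟩
        · rw [← hx.2 j]; exact hx.1.1 j hj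
        · rw [← hx.2 j]; exact hx.1.2.1 j hj
        · rw [← hx.2 j]; exact hx.1.2.2 j hj
      exact Nat.card_of_isEmpty
  -- step 3: denominator partition
  set s : Finset (Fin N → ℕ) := Fintype.piFinset fun _ => Finset.range (m + 1) with hsdef
  have hden : Nat.card {x : Fin m → Fin N // C x} =
      ∑ e ∈ s, Nat.card {x : Fin m → Fin N // C x ∧ ∀ j, seqDeg x j = e j} := by
    rw [natCard_subtype' C]
    have hmem : ∀ x ∈ Finset.univ.filter C, (fun j => seqDeg x j) ∈ s := by
      intro x _
      rw [hsdef, Fintype.mem_piFinset]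
      intro j
      rw [Finset.mem_range]
      have : seqDeg x j ≤ m := by
        calc seqDeg x j ≤ Finset.univ.card := Finset.card_filter_le _ _
        _ = m := by rw [Finset.card_univ, Fintype.card_fin]
      omega
    rw [Finset.card_eq_sum_card_fiberwise hmem]
    apply Finset.sum_congr rfl
    intro e _
    rw [natCard_subtype', Finset.filter_filter]
    congr 1
    apply Finset.filter_congr
    intro x _
    simp [funext_iff]
  -- step 5: tsum
  have htsum : ∑' e : Fin N → ℕ, P e = ∑ e ∈ s, P e := by
    apply tsum_eq_sum
    intro e he
    rw [hsdef, Fintype.mem_piFinset] at he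
    push_neg at he
    obtain ⟨j, hj⟩ := he
    rw [Finset.mem_range] at hj
    push_neg at hj
    have : e j ≤ ∑ j, e j := Finset.single_le_sum (fun i _ => Nat.zero_le _) (Finset.mem_univ j)
    simp only [hP]
    refine if_neg fun hc => Nat.not_succ_le_self m ?_
    have h2 := le_trans hj this
    rwa [hc] at h2
  -- assembly
  show (Nat.card {x : Fin m → Fin N // C x ∧ ∀ j, seqDeg x j = d j} : ℝ) /
      (Nat.card {x : Fin m → Fin N // C x} : ℝ) = P d / ∑' e, P e
  rw [htsum, hnum d, hden]
  rw [show ((if V d then cnt d else 0 : ℕ) : ℝ) = K * P d from hstep d]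
  rw [Nat.cast_sum]
  have : ∀ e ∈ s, ((Nat.card {x : Fin m → Fin N // C x ∧ ∀ j, seqDeg x j = e j} : ℕ) : ℝ)
      = K * P e := by
    intro e _
    rw [hnum e]
    exact hstep e
  rw [Finset.sum_congr rfl this, ← Finset.mul_sum]
  exact mul_div_mul_left _ _ (ne_of_gt hKpos)
end

section
/- There is a constant C > 0 such that for every λ > 0 and every ℓ ∈ {2, 3}, the variance σ_ℓ² = [ f_ℓ(λ)(λ² f_{ℓ−2}(λ) + λ f_{ℓ−1}(λ)) − λ² f_{ℓ−1}(λ)² ] / f_ℓ(λ)² of a truncated Poisson random variable with parameter λ truncated at ℓ satisfies σ_ℓ² ≤ C λ. -/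
open scoped BigOperators

/-- The variance of a truncated Poisson random variable with parameter `lam`
truncated at `ℓ`, as a formula in `lam` and `ℓ`. -/
noncomputable def truncPoissonVar (lam : ℝ) (ℓ : ℕ) : ℝ :=
  (truncF ℓ lam * (lam ^ 2 * truncF (ℓ - 2) lam + lam * truncF (ℓ - 1) lam)
    - lam ^ 2 * (truncF (ℓ - 1) lam) ^ 2) / (truncF ℓ lam) ^ 2


lemma lemA (x : ℝ) : (1 - x) * Real.exp x ≤ 1 := by
  have h1 : 1 - x ≤ Real.exp (-x) := by
    have := Real.add_one_le_exp (-x); linarith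
  have h2 : Real.exp (-x) * Real.exp x = 1 := by
    rw [← Real.exp_add]; simp
  nlinarith [Real.exp_pos x]

lemma hasDerivB (y : ℝ) :
    HasDerivAt (fun x : ℝ => 2 + x - (2 - x) * Real.exp x)
      (1 - (1 - y) * Real.exp y) y := by
  have h1 : HasDerivAt (fun x : ℝ => 2 + x) 1 y := by
    simpa using (hasDerivAt_id y).const_add (2 : ℝ)
  have h2 : HasDerivAt (fun x : ℝ => (2 - x) * Real.exp x)
      ((-1) * Real.exp y + (2 - y) * Real.exp y) y := by
    have ha : HasDerivAt (fun x : ℝ => 2 - x) (-1) y := by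
      simpa using ((hasDerivAt_id y).const_sub (2 : ℝ))
    exact ha.mul (Real.hasDerivAt_exp y)
  have : HasDerivAt (fun x : ℝ => 2 + x - (2 - x) * Real.exp x) _ y := h1.sub h2
  convert this using 1
  ring

lemma lemB (x : ℝ) (hx : 0 ≤ x) : (2 - x) * Real.exp x ≤ 2 + x := by
  have hmono : MonotoneOn (fun x : ℝ => 2 + x - (2 - x) * Real.exp x) (Set.Ici 0) := by
    apply monotoneOn_of_deriv_nonneg (convex_Ici 0)
    · exact (Continuous.continuousOn (by continuity))
    · intro y _
      exact (hasDerivB y).differentiableAt.differentiableWithinAt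
    · intro y _
      rw [(hasDerivB y).deriv]
      nlinarith [lemA y]
  have h0 := hmono (Set.self_mem_Ici) (Set.mem_Ici.mpr hx) hx
  simp at h0
  nlinarith [h0]

lemma hasDerivC (y : ℝ) :
    HasDerivAt (fun x : ℝ => 3 + 2 * x + x ^ 2 / 2 - (3 - x) * Real.exp x)
      (2 + y - (2 - y) * Real.exp y) y := by
  have h1 : HasDerivAt (fun x : ℝ => 3 + 2 * x + x ^ 2 / 2) (2 + y) y := by
    have ha : HasDerivAt (fun x : ℝ => 3 + 2 * x) 2 y := by
      simpa using ((hasDerivAt_id y).const_mul (2 : ℝ)).const_add (3 : ℝ)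
    have hb : HasDerivAt (fun x : ℝ => x ^ 2 / 2) (y : ℝ) y := by
      have := (hasDerivAt_pow 2 y).div_const 2
      simpa using this
    exact ha.add hb
  have h2 : HasDerivAt (fun x : ℝ => (3 - x) * Real.exp x)
      ((-1) * Real.exp y + (3 - y) * Real.exp y) y := by
    have ha : HasDerivAt (fun x : ℝ => 3 - x) (-1) y := by
      simpa using ((hasDerivAt_id y).const_sub (3 : ℝ))
    exact ha.mul (Real.hasDerivAt_exp y)
  have : HasDerivAt (fun x : ℝ => 3 + 2 * x + x ^ 2 / 2 - (3 - x) * Real.exp x) _ y := h1.sub h2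
  convert this using 1
  ring

lemma lemC (x : ℝ) (hx : 0 ≤ x) : (3 - x) * Real.exp x ≤ 3 + 2 * x + x ^ 2 / 2 := by
  have hmono : MonotoneOn (fun x : ℝ => 3 + 2 * x + x ^ 2 / 2 - (3 - x) * Real.exp x)
      (Set.Ici 0) := by
    apply monotoneOn_of_deriv_nonneg (convex_Ici 0)
    · exact (Continuous.continuousOn (by continuity))
    · intro y _
      exact (hasDerivC y).differentiableAt.differentiableWithinAt
    · intro y hy
      rw [(hasDerivC y).deriv]
      have := lemB y (le_of_lt (by simpa using hy))
      linarith
  have h0 := hmono (Set.self_mem_Ici) (Set.mem_Ici.mpr hx) hx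
  simp at h0
  nlinarith [h0]

/-- There is a universal constant `C > 0` with `σ_ℓ² ≤ C·lam` for all `lam > 0` and `ℓ ∈ {2,3}`. -/
theorem stmt_15 :
    ∃ C : ℝ, 0 < C ∧ ∀ lam : ℝ, 0 < lam → ∀ ℓ ∈ ({2, 3} : Set ℕ),
      truncPoissonVar lam ℓ ≤ C * lam := by
  refine ⟨1, one_pos, fun lam hlam ℓ hℓ => ?_⟩
  have hE4 : 1 + lam + lam ^ 2 / 2 + lam ^ 3 / 6 ≤ Real.exp lam := by
    have h := Real.sum_le_exp_of_nonneg hlam.le 4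
    norm_num [Finset.sum_range_succ, Nat.factorial] at h
    linarith
  set E := Real.exp lam with hEdef
  rw [one_mul]
  have hℓ' : ℓ = 2 ∨ ℓ = 3 := by simpa using hℓ
  rcases hℓ' with rfl | rfl
  · have hsimp : truncPoissonVar lam 2 =
        ((E - 1 - lam) * (lam ^ 2 * E + lam * (E - 1)) - lam ^ 2 * (E - 1) ^ 2)
          / (E - 1 - lam) ^ 2 := by
      simp [truncPoissonVar, truncF, Finset.sum_range_succ, Nat.factorial, hEdef]
      ring_nf
    rw [hsimp]
    have hf2 : 0 < E - 1 - lam := by nlinarith [pow_pos hlam 2, pow_pos hlam 3]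
    rw [div_le_iff₀ (by positivity)]
    have key : (2 - lam) * (E - 1 - lam) ≤ lam ^ 2 := by
      nlinarith [lemB lam hlam.le]
    nlinarith [mul_le_mul_of_nonneg_left key (sq_nonneg lam)]
  · have hsimp : truncPoissonVar lam 3 =
        ((E - 1 - lam - lam ^ 2 / 2) * (lam ^ 2 * (E - 1) + lam * (E - 1 - lam))
          - lam ^ 2 * (E - 1 - lam) ^ 2) / (E - 1 - lam - lam ^ 2 / 2) ^ 2 := by
      simp [truncPoissonVar, truncF, Finset.sum_range_succ, Nat.factorial, hEdef]
      ring_nf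
    rw [hsimp]
    have hf3 : 0 < E - 1 - lam - lam ^ 2 / 2 := by nlinarith [pow_pos hlam 3]
    rw [div_le_iff₀ (by positivity)]
    have key : (3 - lam) * (E - 1 - lam - lam ^ 2 / 2) ≤ lam ^ 3 / 2 := by
      nlinarith [lemC lam hlam.le]
    nlinarith [mul_le_mul_of_nonneg_left key (by positivity : (0:ℝ) ≤ lam ^ 3 / 2)]
end
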